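/- arXiv:2105.07470 — 2 statements merged into one kernel-verified Lean document; each statement's English description precedes it below -/
import Mathlib

section
/- Let 𝒜 be an NFA that recognizes a language L ⊆ Σ*. Suppose that its forward determinization has k states and its backward determinization has ℓ states. Then there is a UFA with at most min{k, ℓ} states that recognizes the complement language Σ* \ L. -/
/-- A nondeterministic finite automaton with state type `Q` and alphabet `A`:
transition relation `δ`, initial states `I`, accepting states `F`. -/
structure NFA' (Q A : Type) where
  δ : Q → A → Q → Prop
  I : Set Q
  F : Set Q

namespace NFA'

variable {Q A : Type}

/-- `M.Steps q w q'` holds iff there is a run from `q` to `q'` reading the word `w`. -/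
def Steps (M : NFA' Q A) : Q → List A → Q → Prop
  | q, [], q' => q = q'
  | q, a :: w, q' => ∃ p, M.δ q a p ∧ M.Steps p w q'

/-- An accepting run for the word `w`, given as the sequence of visited states. -/
def IsAccRun (M : NFA' Q A) (w : List A) (r : Fin (w.length + 1) → Q) : Prop :=
  r 0 ∈ M.I ∧ r (Fin.last w.length) ∈ M.F ∧
    ∀ i : Fin w.length, M.δ (r i.castSucc) (w.get i) (r i.succ)

/-- The language recognized by `M`: words with at least one accepting run. -/
def Lang (M : NFA' Q A) : Set (List A) :=
  {w | ∃ r, M.IsAccRun w r}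

/-- `M` is unambiguous (a UFA) if every word has at most one accepting run. -/
def Unambiguous (M : NFA' Q A) : Prop :=
  ∀ (w : List A) (r r' : Fin (w.length + 1) → Q),
    M.IsAccRun w r → M.IsAccRun w r' → r = r'

/-- The state set `{δ(I,w) | w ∈ Σ*}` of the forward determinization of `M`. -/
def fwdStates (M : NFA' Q A) : Set (Set Q) :=
  {S | ∃ w : List A, S = {r | ∃ q ∈ M.I, M.Steps q w r}}

/-- The state set `{δ⁻¹(w,F) | w ∈ Σ*}` of the backward determinization of `M`. -/
def bwdStates (M : NFA' Q A) : Set (Set Q) :=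
  {S | ∃ w : List A, S = {r | ∃ q ∈ M.F, M.Steps r w q}}

end NFA'

namespace NFA'

variable {Q A : Type}

theorem steps_append (M : NFA' Q A) (u v : List A) (q r : Q) :
    M.Steps q (u ++ v) r ↔ ∃ p, M.Steps q u p ∧ M.Steps p v r := by
  induction u generalizing q with
  | nil => simp [Steps]
  | cons a u ih =>
    constructor
    · rintro ⟨p, h1, h2⟩
      obtain ⟨x, h3, h4⟩ := (ih p).mp h2
      exact ⟨x, ⟨p, h1, h3⟩, h4⟩
    · rintro ⟨x, ⟨p, h1, h3⟩, h4⟩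
      exact ⟨p, h1, (ih p).mpr ⟨x, h3, h4⟩⟩

theorem steps_of_run (M : NFA' Q A) : ∀ (w : List A) (r : Fin (w.length + 1) → Q),
    (∀ i : Fin w.length, M.δ (r i.castSucc) (w.get i) (r i.succ)) →
    M.Steps (r 0) w (r (Fin.last w.length)) := by
  intro w
  induction w with
  | nil => intro r _; rfl
  | cons a w ih =>
    intro r h
    refine ⟨r 1, ?_, ?_⟩
    · have := h ⟨0, Nat.succ_pos _⟩
      simpa using this
    · have := ih (fun i => r i.succ) (fun i => by
        have := h i.succ
        simp only [Fin.succ_castSucc]; exact this)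
      simpa [Fin.succ_last] using this

theorem run_of_steps (M : NFA' Q A) : ∀ (w : List A) (q q' : Q), M.Steps q w q' →
    ∃ r : Fin (w.length + 1) → Q, r 0 = q ∧ r (Fin.last w.length) = q' ∧
      ∀ i : Fin w.length, M.δ (r i.castSucc) (w.get i) (r i.succ) := by
  intro w
  induction w with
  | nil => intro q q' h; exact ⟨fun _ => q, rfl, h, fun i => i.elim0⟩
  | cons a w ih =>
    rintro q q' ⟨p, hδ, hs⟩
    obtain ⟨r, h0, hl, ht⟩ := ih p q' hs
    subst h0
    refine ⟨Fin.cons q r, rfl, ?_, ?_⟩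
    · rw [show Fin.last ((a :: w).length) = (Fin.last w.length).succ from rfl,
        Fin.cons_succ]
      exact hl
    · intro i
      refine i.cases ?_ ?_
      · exact hδ
      · intro j
        have := ht j
        simp only [← Fin.succ_castSucc, Fin.cons_succ]; exact this

theorem mem_lang_iff (M : NFA' Q A) (w : List A) :
    w ∈ M.Lang ↔ ∃ q ∈ M.I, ∃ p ∈ M.F, M.Steps q w p := by
  constructor
  · rintro ⟨r, h0, hl, ht⟩
    exact ⟨r 0, h0, r (Fin.last w.length), hl, M.steps_of_run w r ht⟩
  · rintro ⟨q, hq, p, hp, hs⟩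
    obtain ⟨r, h0, hl, ht⟩ := M.run_of_steps w q p hs
    exact ⟨r, h0 ▸ hq, hl ▸ hp, ht⟩

end NFA'

namespace NFA'
variable {Q A : Type}

def stepSet (M : NFA' Q A) (S : Set Q) (a : A) : Set Q := {r | ∃ q ∈ S, M.δ q a r}

def fwdSet (M : NFA' Q A) (w : List A) : Set Q := {r | ∃ q ∈ M.I, M.Steps q w r}

theorem fwdSet_nil (M : NFA' Q A) : M.fwdSet [] = M.I := by
  ext q; simp [fwdSet, Steps]

theorem fwdSet_append_singleton (M : NFA' Q A) (w : List A) (a : A) :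
    M.fwdSet (w ++ [a]) = M.stepSet (M.fwdSet w) a := by
  ext r
  simp only [fwdSet, stepSet, Set.mem_setOf_eq, steps_append]
  constructor
  · rintro ⟨q, hq, p, hw, x, hx, rfl⟩
    exact ⟨p, ⟨q, hq, hw⟩, hx⟩
  · rintro ⟨p, ⟨q, hq, hw⟩, hx⟩
    exact ⟨q, hq, p, hw, r, hx, rfl⟩

/-- The complemented forward determinization of `M`. -/
def fwdDet (M : NFA' Q A) : NFA' (↥M.fwdStates) A where
  δ := fun S a T => (T : Set Q) = M.stepSet S a
  I := {S | (S : Set Q) = M.I}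
  F := {S | ∀ q ∈ (S : Set Q), q ∉ M.F}

theorem unambiguous_of_det {S : Type} (N : NFA' S A)
    (hI : ∀ p q, p ∈ N.I → q ∈ N.I → p = q)
    (hδ : ∀ s a t t', N.δ s a t → N.δ s a t' → t = t') : N.Unambiguous := by
  intro w r r' h h'
  funext i
  induction i using Fin.induction with
  | zero => exact hI _ _ h.1 h'.1
  | succ i ih => exact hδ _ (w.get i) _ _ (ih ▸ h.2.2 i) (h'.2.2 i)

def mkS (M : NFA' Q A) (w : List A) : ↥M.fwdStates := ⟨M.fwdSet w, w, rfl⟩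

theorem fwdDet_steps_mkS (M : NFA' Q A) :
    ∀ (w u : List A), M.fwdDet.Steps (M.mkS u) w (M.mkS (u ++ w)) := by
  intro w
  induction w with
  | nil => intro u; simp only [List.append_nil]; rfl
  | cons a w ih =>
    intro u
    refine ⟨M.mkS (u ++ [a]), M.fwdSet_append_singleton u a, ?_⟩
    simpa using ih (u ++ [a])

theorem fwdDet_steps_det (M : NFA' Q A) :
    ∀ (w u : List A) (S T : ↥M.fwdStates), M.fwdDet.Steps S w T →
      (S : Set Q) = M.fwdSet u → (T : Set Q) = M.fwdSet (u ++ w) := by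
  intro w
  induction w with
  | nil => rintro u S T rfl hS; simpa using hS
  | cons a w ih =>
    rintro u S T ⟨P, hδ, hs⟩ hS
    have hP : (P : Set Q) = M.fwdSet (u ++ [a]) := by
      rw [hδ, hS, M.fwdSet_append_singleton]
    have := ih (u ++ [a]) P T hs hP
    simpa using this

theorem fwdDet_lang (M : NFA' Q A) : M.fwdDet.Lang = M.Langᶜ := by
  ext w
  rw [Set.mem_compl_iff, mem_lang_iff, mem_lang_iff]
  constructor
  · rintro ⟨S, hS, T, hT, hsteps⟩
    have hTv : (T : Set Q) = M.fwdSet w := by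
      have := M.fwdDet_steps_det w [] S T hsteps (by rw [M.fwdSet_nil]; exact hS)
      simpa using this
    rintro ⟨q, hq, p, hp, hs⟩
    exact hT p (by rw [hTv]; exact ⟨q, hq, hs⟩) hp
  · intro hno
    refine ⟨M.mkS [], ?_, M.mkS w, ?_, by simpa using M.fwdDet_steps_mkS w []⟩
    · exact M.fwdSet_nil
    · intro q hq hqF
      obtain ⟨p, hp, hs⟩ := hq
      exact hno ⟨p, hp, q, hqF, hs⟩

theorem fwdDet_unambiguous (M : NFA' Q A) : M.fwdDet.Unambiguous := by
  apply unambiguous_of_det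
  · intro p q hp hq
    exact Subtype.ext (hp.trans hq.symm)
  · intro s a t t' ht ht'
    exact Subtype.ext (ht.trans ht'.symm)

theorem fwd_complement (M : NFA' Q A) [Fintype Q] :
    ∃ (Q' : Type) (_ : Fintype Q') (M' : NFA' Q' A),
      M'.Unambiguous ∧ M'.Lang = M.Langᶜ ∧ Fintype.card Q' ≤ M.fwdStates.ncard := by
  classical
  have : Finite (↥M.fwdStates) := Subtype.finite
  letI fin : Fintype (↥M.fwdStates) := Fintype.ofFinite _
  refine ⟨↥M.fwdStates, fin, M.fwdDet, M.fwdDet_unambiguous, M.fwdDet_lang, ?_⟩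
  rw [← Nat.card_eq_fintype_card, Nat.card_coe_set_eq]

end NFA'

namespace NFA'
variable {Q A : Type}

/-- The reversal of an NFA. -/
def rev (M : NFA' Q A) : NFA' Q A where
  δ := fun q a p => M.δ p a q
  I := M.F
  F := M.I

theorem steps_rev (M : NFA' Q A) : ∀ (w : List A) (q p : Q),
    M.rev.Steps q w p ↔ M.Steps p w.reverse q := by
  intro w
  induction w with
  | nil => intro q p; exact eq_comm
  | cons a w ih =>
    intro q p
    rw [List.reverse_cons, steps_append]
    constructor
    · rintro ⟨x, hδ, hs⟩
      exact ⟨x, (ih x p).mp hs, q, hδ, rfl⟩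
    · rintro ⟨x, hs, y, hδ, rfl⟩
      exact ⟨x, hδ, (ih x p).mpr hs⟩

theorem bwdStates_eq_rev (M : NFA' Q A) : M.bwdStates = M.rev.fwdStates := by
  ext S
  constructor
  · rintro ⟨w, rfl⟩
    refine ⟨w.reverse, ?_⟩
    ext r
    constructor
    · rintro ⟨q, hq, hs⟩
      exact ⟨q, hq, (M.steps_rev w.reverse q r).mpr (by simpa using hs)⟩
    · rintro ⟨q, hq, hs⟩
      exact ⟨q, hq, by simpa using (M.steps_rev w.reverse q r).mp hs⟩
  · rintro ⟨w, rfl⟩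
    refine ⟨w.reverse, ?_⟩
    ext r
    constructor
    · rintro ⟨q, hq, hs⟩
      exact ⟨q, hq, (M.steps_rev w q r).mp hs⟩
    · rintro ⟨q, hq, hs⟩
      exact ⟨q, hq, (M.steps_rev w q r).mpr hs⟩

theorem mem_rev_lang (M : NFA' Q A) (w : List A) :
    w ∈ M.rev.Lang ↔ w.reverse ∈ M.Lang := by
  rw [mem_lang_iff, mem_lang_iff]
  constructor
  · rintro ⟨q, hq, p, hp, hs⟩
    exact ⟨p, hp, q, hq, (M.steps_rev w q p).mp hs⟩
  · rintro ⟨q, hq, p, hp, hs⟩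
    exact ⟨p, hp, q, hq, (M.steps_rev w p q).mpr hs⟩

theorem isAccRun_rev (N : NFA' Q A) (w : List A) (r : Fin (w.length + 1) → Q)
    (h : N.rev.IsAccRun w r) :
    N.IsAccRun w.reverse
      (fun i => r (Fin.rev (Fin.cast (by simp) i : Fin (w.length + 1)))) := by
  obtain ⟨h0, hl, ht⟩ := h
  refine ⟨?_, ?_, ?_⟩
  · simpa [Fin.rev_zero, rev] using hl
  · have : Fin.rev (Fin.cast (by simp : w.reverse.length + 1 = w.length + 1)
        (Fin.last w.reverse.length)) = 0 := by
      ext; simp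
    simp only [this]
    exact h0
  · intro i
    have hi : (i : ℕ) < w.length := by
      have := i.isLt; simpa using this
    set i' : Fin w.length := ⟨i, hi⟩ with hi'
    have e1 : Fin.rev (Fin.cast (by simp : w.reverse.length + 1 = w.length + 1)
        i.castSucc) = (Fin.rev i').succ := by
      ext; simp [Fin.val_rev, hi']; try omega
    have e2 : Fin.rev (Fin.cast (by simp : w.reverse.length + 1 = w.length + 1)
        i.succ) = (Fin.rev i').castSucc := by
      ext; simp [Fin.val_rev, hi']; try omega
    have hg : w.reverse.get i = w.get (Fin.rev i') := by
      simp [List.get_eq_getElem, List.getElem_reverse, Fin.val_rev]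
      congr 1
      simp only [hi']; omega
    simp only [e1, e2, hg]
    exact ht (Fin.rev i')

theorem rev_unambiguous (N : NFA' Q A) (h : N.Unambiguous) : N.rev.Unambiguous := by
  intro w r r' hr hr'
  have := h w.reverse _ _ (N.isAccRun_rev w r hr) (N.isAccRun_rev w r' hr')
  funext j
  have hj := congrFun this (Fin.cast (by simp) (Fin.rev j))
  simpa [Fin.rev_rev] using hj

end NFA'

/-- If the forward determinization of an NFA `M` has `k` states and its backward
determinization has `ℓ` states, then there is a UFA with at most `min k ℓ` states
recognizing the complement of `L(M)`. -/
theorem complement_min_det {Q A : Type} [Fintype Q] [Fintype A]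
    (M : NFA' Q A) (k ℓ : ℕ)
    (hk : M.fwdStates.ncard = k) (hℓ : M.bwdStates.ncard = ℓ) :
    ∃ (Q' : Type) (_ : Fintype Q') (M' : NFA' Q' A),
      M'.Unambiguous ∧ M'.Lang = M.Langᶜ ∧ Fintype.card Q' ≤ min k ℓ := by
  rcases le_total k ℓ with h | h
  · obtain ⟨Q', f, M', h1, h2, h3⟩ := M.fwd_complement
    exact ⟨Q', f, M', h1, h2, by omega⟩
  · obtain ⟨Q', f, N, h1, h2, h3⟩ := M.rev.fwd_complement
    refine ⟨Q', f, N.rev, N.rev_unambiguous h1, ?_, ?_⟩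
    · ext w
      rw [NFA'.mem_rev_lang, h2]
      simp [NFA'.mem_rev_lang, M.mem_rev_lang]
    · rw [← M.bwdStates_eq_rev] at h3
      omega
end

section
/- Let 𝒜 = (Q,Σ,δ,I,F) be a UFA, and let G = (Q,E) be the graph with E := { {q,q'} ⊆ Q | q ≠ q' and there exist q_0, q_0' ∈ I and a word w ∈ Σ* with runs q_0 →^w q and q_0' →^w q' }. Then every state Y ⊆ Q of the backward determinization of 𝒜 (i.e., every set of the form δ^{−1}(w,F) for a word w) is a coclique in G. -/
namespace NFA'

variable {Q A : Type}

lemma steps_run (M : NFA' Q A) : ∀ {x : List A} {q q' : Q}, M.Steps q x q' →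
    ∃ r : Fin (x.length + 1) → Q, r ⟨0, by omega⟩ = q ∧ r ⟨x.length, by omega⟩ = q' ∧
      ∀ i (h : i < x.length),
        M.δ (r ⟨i, by omega⟩) (x.get ⟨i, h⟩) (r ⟨i + 1, by omega⟩) := by
  intro x
  induction x with
  | nil =>
    intro q q' hs
    exact ⟨fun _ => q, rfl, hs.symm ▸ rfl, fun i h => absurd h (by simp)⟩
  | cons a x ih =>
    rintro q q' ⟨p, hδ, hs⟩
    obtain ⟨r, h0, hl, hδ'⟩ := ih hs
    refine ⟨fun i => match i with
      | ⟨0, _⟩ => q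
      | ⟨j + 1, hj⟩ => r ⟨j, by simp only [List.length_cons] at hj; omega⟩,
      rfl, hl, ?_⟩
    intro i h
    match i with
    | 0 =>
      show M.δ q ((a :: x).get ⟨0, h⟩) (r ⟨0, _⟩)
      rw [show r ⟨0, _⟩ = p from h0]
      exact hδ
    | (j + 1) =>
      have hj : j < x.length := by simp only [List.length_cons] at h; omega
      show M.δ (r ⟨j, _⟩) ((a :: x).get ⟨j + 1, h⟩) (r ⟨j + 1, _⟩)
      exact hδ' j hj

lemma exists_accRun_through (M : NFA' Q A) {x w : List A} {q₀ u qf : Q}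
    (h₀ : q₀ ∈ M.I) (hx : M.Steps q₀ x u) (hw : M.Steps u w qf) (hf : qf ∈ M.F) :
    ∃ r : Fin ((x ++ w).length + 1) → Q, M.IsAccRun (x ++ w) r ∧
      r ⟨x.length, by simp only [List.length_append]; omega⟩ = u := by
  obtain ⟨r1, h10, h1l, h1δ⟩ := M.steps_run hx
  obtain ⟨r2, h20, h2l, h2δ⟩ := M.steps_run hw
  have hlen : (x ++ w).length = x.length + w.length := by simp
  refine ⟨fun i => if h : i.val < x.length then r1 ⟨i.val, by omega⟩
      else r2 ⟨i.val - x.length, by have := i.isLt; omega⟩, ⟨?_, ?_, ?_⟩, ?_⟩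
  · -- r 0 ∈ I
    show (if h : (0 : Fin _).val < x.length then _ else _) ∈ M.I
    rcases Nat.eq_zero_or_pos x.length with h | h
    · have hx0 : q₀ = u := by
        rw [← h10, ← h1l]; congr 1; exact Fin.ext (by simp [h])
      simp only [Fin.val_zero, h, dif_neg (lt_irrefl 0)]
      have h20' : r2 ⟨0 - 0, by omega⟩ = u := h20
      rw [h20']
      exact hx0 ▸ h₀
    · simp only [Fin.val_zero, dif_pos h]
      simpa [h, ← h10] using h₀
  · -- r last ∈ F
    show (if h : (Fin.last (x ++ w).length).val < x.length then _ else _) ∈ M.F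
    have : ¬ (Fin.last (x ++ w).length).val < x.length := by simp [hlen]
    simp only [dif_neg this]
    rw [show r2 ⟨(Fin.last (x++w).length).val - x.length, _⟩ = qf from by
      rw [← h2l]; congr 1; exact Fin.ext (by simp [hlen])]
    exact hf
  · -- steps
    intro i
    have hi : i.val < x.length + w.length := by have := i.isLt; omega
    have hget : (x ++ w).get i = if h : i.val < x.length then x.get ⟨i.val, h⟩
        else w.get ⟨i.val - x.length, by omega⟩ := by
      rcases Nat.lt_or_ge i.val x.length with h | h
      · rw [dif_pos h]
        simp [List.get_eq_getElem, List.getElem_append_left h]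
      · rw [dif_neg (Nat.not_lt.2 h)]
        simp [List.get_eq_getElem, List.getElem_append_right h]
    rcases Nat.lt_or_ge i.val x.length with h | h
    · -- inside x
      rcases Nat.lt_or_ge (i.val + 1) x.length with h2 | h2
      · have := h1δ i.val h
        simp only [Fin.castSucc, Fin.succ, Fin.castAdd, Fin.castLE, hget, dif_pos h, dif_pos h2]
        exact this
      · have hexact : i.val + 1 = x.length := by omega
        have := h1δ i.val h
        simp only [Fin.castSucc, Fin.succ, Fin.castAdd, Fin.castLE, hget, dif_pos h,
          dif_neg (by omega : ¬ i.val + 1 < x.length)]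
        rw [show r2 ⟨i.val + 1 - x.length, _⟩ = u from by
          rw [← h20]; congr 1; exact Fin.ext (by simp; omega)]
        rw [show u = r1 ⟨i.val + 1, by omega⟩ from by
          rw [← h1l]; congr 1; exact Fin.ext (by simp [hexact])]
        exact this
    · -- inside w
      have hw2 : i.val - x.length < w.length := by omega
      have := h2δ (i.val - x.length) hw2
      simp only [Fin.castSucc, Fin.succ, Fin.castAdd, Fin.castLE, hget,
        dif_neg (Nat.not_lt.2 h), dif_neg (by omega : ¬ i.val + 1 < x.length)]
      rw [show (⟨i.val + 1 - x.length, by omega⟩ : Fin (w.length + 1)) =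
        ⟨(i.val - x.length) + 1, by omega⟩ from Fin.ext (by simp; omega)]
      exact this
  · -- value at x.length
    show (if h : x.length < x.length then _ else _) = u
    simp only [dif_neg (lt_irrefl x.length)]
    rw [← h20]; congr 1; exact Fin.ext (by simp)

end NFA'

/-- The graph on the states of `M` where `q` and `q'` are adjacent iff they are
distinct and reachable from initial states via the same word. -/
def NFA'.reachGraph {Q A : Type} (M : NFA' Q A) : SimpleGraph Q where
  Adj q q' := q ≠ q' ∧ ∃ (w : List A) (q₀ q₀' : Q),
    q₀ ∈ M.I ∧ q₀' ∈ M.I ∧ M.Steps q₀ w q ∧ M.Steps q₀' w q'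
  symm := by
    constructor
    rintro q q' ⟨hne, w, q₀, q₀', h₀, h₀', hs, hs'⟩
    exact ⟨hne.symm, w, q₀', q₀, h₀', h₀, hs', hs⟩
  loopless := ⟨fun q h => h.1 rfl⟩

/-- For a UFA `M`, every state `δ⁻¹(w,F)` of the backward determinization of `M`
is a coclique in the graph `M.reachGraph`. -/
theorem bwd_state_coclique {Q A : Type} [Fintype Q] [Fintype A]
    (M : NFA' Q A) (hM : M.Unambiguous) (w : List A) :
    Set.Pairwise {r : Q | ∃ q ∈ M.F, M.Steps r w q}
      (fun u v => ¬ M.reachGraph.Adj u v) := by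
  intro u hu v hv hne hadj
  obtain ⟨_, x, q₀, q₀', h₀, h₀', hsu, hsv⟩ := (show _ ∧ _ from hadj)
  obtain ⟨qu, hqu, hwu⟩ := hu
  obtain ⟨qv, hqv, hwv⟩ := hv
  obtain ⟨r, hr, hru⟩ := M.exists_accRun_through h₀ hsu hwu hqu
  obtain ⟨r', hr', hrv⟩ := M.exists_accRun_through h₀' hsv hwv hqv
  have := hM (x ++ w) r r' hr hr'
  exact hne (hru ▸ hrv ▸ congrFun this ⟨x.length, by simp only [List.length_append]; omega⟩)
end
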